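/- Let n ≥ 1, let Ω ⊆ ℝⁿ be a nonempty open bounded convex set, and let u : closure(Ω) → ℝ be convex and continuous with u = 0 on ∂Ω. Then for every δ ≥ 0, ω_u(δ) = sup{−u(y) : y ∈ closure(Ω), dist(y, ∂Ω) ≤ δ}. -/

import Mathlib

open Set Metric MeasureTheory

/-- The modulus of continuity of `u` over the set `A`. -/
noncomputable def modCont {n : ℕ} (A : Set (EuclideanSpace ℝ (Fin n)))
    (u : EuclideanSpace ℝ (Fin n) → ℝ) (δ : ℝ) : ℝ :=
  sSup {d | ∃ x ∈ A, ∃ y ∈ A, ‖x - y‖ ≤ δ ∧ d = |u x - u y|}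

/-- A ray from a point of the closure of a bounded open set meets the frontier. -/
lemma exists_frontier_ray {n : ℕ} {Ω : Set (EuclideanSpace ℝ (Fin n))}
    (hbdd : Bornology.IsBounded Ω) (hopen : IsOpen Ω)
    {y v : EuclideanSpace ℝ (Fin n)} (hy : y ∈ closure Ω) (hv : v ≠ 0) :
    ∃ t : ℝ, 0 ≤ t ∧ y + t • v ∈ frontier Ω := by
  set g : ℝ → EuclideanSpace ℝ (Fin n) := fun t => y + t • v with hg
  have hgc : Continuous g := by fun_prop
  set T : Set ℝ := {t | 0 ≤ t ∧ g t ∈ closure Ω} with hT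
  have h0T : (0:ℝ) ∈ T := by
    refine ⟨le_refl 0, ?_⟩
    simpa [hg] using hy
  obtain ⟨R, hR⟩ := hbdd.closure.subset_closedBall 0
  have hvpos : 0 < ‖v‖ := norm_pos_iff.mpr hv
  have hbddT : BddAbove T := by
    refine ⟨(R + ‖y‖) / ‖v‖, fun t ht => ?_⟩
    have h1 : ‖g t‖ ≤ R := by simpa [dist_eq_norm] using hR ht.2
    have h2 : t * ‖v‖ = ‖t • v‖ := by
      rw [norm_smul, Real.norm_eq_abs, abs_of_nonneg ht.1]
    have h3 : ‖t • v‖ ≤ ‖g t‖ + ‖y‖ := by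
      have h4 : t • v = g t - y := by simp [hg]
      rw [h4]; exact norm_sub_le _ _
    rw [le_div_iff₀ hvpos]
    nlinarith
  have hTc : IsClosed T := by
    have : T = Ici (0:ℝ) ∩ g ⁻¹' (closure Ω) := by
      ext t
      constructor <;> intro h <;> exact ⟨h.1, h.2⟩
    rw [this]
    exact isClosed_Ici.inter (isClosed_closure.preimage hgc)
  set t₀ := sSup T with ht₀
  have ht₀T : t₀ ∈ T := hTc.csSup_mem ⟨0, h0T⟩ hbddT
  refine ⟨t₀, ht₀T.1, ?_⟩
  rw [hopen.frontier_eq]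
  refine ⟨ht₀T.2, fun hmem => ?_⟩
  have : IsOpen (g ⁻¹' Ω) := hopen.preimage hgc
  obtain ⟨ε, hε, hball⟩ := Metric.isOpen_iff.mp this t₀ hmem
  have hmem2 : t₀ + ε / 2 ∈ T := by
    constructor
    · linarith [ht₀T.1]
    · refine subset_closure (hball ?_)
      rw [mem_ball, Real.dist_eq, show t₀ + ε/2 - t₀ = ε/2 by ring,
        abs_of_pos (by linarith)]
      linarith
  have := le_csSup hbddT hmem2
  linarith

/-- For a continuous convex function vanishing on the boundary of a nonempty open bounded
convex set, `ω_u(δ) = sup {-u(y) : y ∈ closure Ω, dist(y, ∂Ω) ≤ δ}`. -/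
theorem modulus_eq_sup_neg (n : ℕ) (hn : 1 ≤ n)
    (Ω : Set (EuclideanSpace ℝ (Fin n))) (hne : Ω.Nonempty)
    (hopen : IsOpen Ω) (hbdd : Bornology.IsBounded Ω) (hconv : Convex ℝ Ω)
    (u : EuclideanSpace ℝ (Fin n) → ℝ)
    (huconv : ConvexOn ℝ (closure Ω) u) (hucont : ContinuousOn u (closure Ω))
    (hbc : ∀ x ∈ frontier Ω, u x = 0) :
    ∀ δ : ℝ, 0 ≤ δ →
      modCont (closure Ω) u δ =
        sSup {d | ∃ y ∈ closure Ω, infDist y (frontier Ω) ≤ δ ∧ d = -u y} := by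
  -- basic setup
  have hvne : (EuclideanSpace.single (⟨0, hn⟩ : Fin n) (1:ℝ)) ≠ 0 := by
    intro h
    have := congrArg (fun w : EuclideanSpace ℝ (Fin n) => w (⟨0, hn⟩ : Fin n)) h
    simp [EuclideanSpace.single_apply] at this
  set v₀ := EuclideanSpace.single (⟨0, hn⟩ : Fin n) (1:ℝ) with hv₀
  obtain ⟨p₀, hp₀⟩ := hne
  have hp₀c : p₀ ∈ closure Ω := subset_closure hp₀
  -- the frontier is nonempty
  obtain ⟨tf, htf0, htf⟩ := exists_frontier_ray hbdd hopen hp₀c hvne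
  have hFne : (frontier Ω).Nonempty := ⟨_, htf⟩
  have hFsub : frontier Ω ⊆ closure Ω := frontier_subset_closure
  -- u is nonpositive on the closure
  have hupos : ∀ p ∈ closure Ω, u p ≤ 0 := by
    intro p hp
    rcases (closure_eq_self_union_frontier Ω ▸ hp : p ∈ Ω ∪ frontier Ω) with hpΩ | hpF
    · obtain ⟨t₁, ht₁0, hz₁⟩ := exists_frontier_ray hbdd hopen (subset_closure hpΩ) hvne
      have hvne' : -v₀ ≠ 0 := by simpa using hvne
      obtain ⟨t₂, ht₂0, hz₂⟩ := exists_frontier_ray hbdd hopen (subset_closure hpΩ) hvne'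
      have ht₁pos : 0 < t₁ := by
        rcases ht₁0.lt_or_eq with h | h
        · exact h
        · exfalso
          rw [← h, zero_smul, add_zero] at hz₁
          exact (hopen.frontier_eq ▸ hz₁).2 hpΩ
      have ht₂pos : 0 < t₂ := by
        rcases ht₂0.lt_or_eq with h | h
        · exact h
        · exfalso
          rw [← h, zero_smul, add_zero] at hz₂
          exact (hopen.frontier_eq ▸ hz₂).2 hpΩ
      set c₁ : ℝ := t₂ / (t₁ + t₂) with hc₁
      set c₂ : ℝ := t₁ / (t₁ + t₂) with hc₂
      have hsum : t₁ + t₂ ≠ 0 := by positivity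
      have hcomb : c₁ • (p + t₁ • v₀) + c₂ • (p + t₂ • (-v₀)) = p := by
        rw [hc₁, hc₂]
        match_scalars <;> (field_simp; try ring)
      have h1 : (0:ℝ) ≤ c₁ := by positivity
      have h2 : (0:ℝ) ≤ c₂ := by positivity
      have h3 : c₁ + c₂ = 1 := by rw [hc₁, hc₂]; field_simp; ring
      have h4 := huconv.2 (hFsub hz₁) (hFsub hz₂) h1 h2 h3
      rw [hcomb, hbc _ hz₁, hbc _ hz₂] at h4
      simpa using h4
    · exact le_of_eq (hbc p hpF)
  intro δ hδ
  unfold modCont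
  set F := frontier Ω with hF
  set A := closure Ω with hA
  set SL : Set ℝ := {d | ∃ x ∈ A, ∃ y ∈ A, ‖x - y‖ ≤ δ ∧ d = |u x - u y|} with hSL
  set SR : Set ℝ := {d | ∃ y ∈ A, infDist y F ≤ δ ∧ d = -u y} with hSR
  have hAcomp : IsCompact A := hbdd.isCompact_closure
  obtain ⟨C, hC⟩ := hAcomp.exists_bound_of_continuousOn hucont
  have hC' : ∀ p ∈ A, |u p| ≤ C := fun p hp => hC p hp
  have hbddSR : BddAbove SR := by
    refine ⟨C, fun d hd => ?_⟩
    obtain ⟨y, hy, _, rfl⟩ := hd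
    exact (neg_le_abs _).trans (hC' y hy)
  have hbddSL : BddAbove SL := by
    refine ⟨C + C, fun d hd => ?_⟩
    obtain ⟨x, hx, y, hy, _, rfl⟩ := hd
    calc |u x - u y| ≤ |u x| + |u y| := abs_sub _ _
      _ ≤ C + C := add_le_add (hC' x hx) (hC' y hy)
  have h0SR : (0:ℝ) ∈ SR := by
    obtain ⟨z, hz⟩ := hFne
    exact ⟨z, hFsub hz, by simp [infDist_zero_of_mem hz, hδ], by rw [hbc z hz]; ring⟩
  have h0SL : (0:ℝ) ∈ SL := ⟨p₀, hp₀c, p₀, hp₀c, by simp [hδ], by simp⟩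
  have hSRne : SR.Nonempty := ⟨0, h0SR⟩
  have hSLne : SL.Nonempty := ⟨0, h0SL⟩
  have hS0 : 0 ≤ sSup SR := le_csSup hbddSR h0SR
  have hFcomp : IsCompact F := hAcomp.of_isClosed_subset isClosed_frontier hFsub
  -- key inequality
  have key : ∀ x ∈ A, ∀ y ∈ A, ‖x - y‖ ≤ δ → u x - u y ≤ sSup SR := by
    intro x hx y hy hxy
    by_cases hxy0 : x = y
    · subst hxy0; simpa using hS0
    by_cases hyd : infDist y F ≤ δ
    · have h1 : -u y ≤ sSup SR := le_csSup hbddSR ⟨y, hy, hyd, rfl⟩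
      have h2 := hupos x hx
      linarith
    push_neg at hyd
    set a := ‖x - y‖ with ha
    have hapos : 0 < a := norm_pos_iff.mpr (sub_ne_zero.mpr hxy0)
    obtain ⟨t₀, ht₀0, hzF⟩ := exists_frontier_ray hbdd hopen hy (sub_ne_zero.mpr hxy0)
    set z := y + t₀ • (x - y) with hz
    have hdistyz : dist y z = t₀ * a := by
      rw [hz, dist_eq_norm]
      simp [norm_smul, abs_of_nonneg ht₀0, ha]
    have hMgt : δ < t₀ * a := by
      have := infDist_le_dist_of_mem hzF (x := y)
      rw [hdistyz] at this
      linarith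
    have hMpos : 0 < t₀ * a := lt_of_le_of_lt hδ hMgt
    have ht₀pos : 0 < t₀ := by
      rcases ht₀0.lt_or_eq with h | h
      · exact h
      · exfalso; rw [← h, zero_mul] at hMpos; exact lt_irrefl 0 hMpos
    have ht₀gt1 : 1 < t₀ := by nlinarith
    have hzA : z ∈ A := hFsub hzF
    -- x as convex combination of y and z
    have hxcomb : (1 - 1/t₀) • y + (1/t₀) • z = x := by
      rw [hz]
      match_scalars <;> (field_simp; try ring)
    have hux : u x ≤ (1 - 1/t₀) * u y := by
      have h1 : (0:ℝ) ≤ 1 - 1/t₀ := by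
        rw [sub_nonneg, div_le_one ht₀pos]; linarith
      have h2 : (0:ℝ) ≤ 1/t₀ := by positivity
      have h3 : (1 - 1/t₀) + 1/t₀ = 1 := by ring
      have h4 := huconv.2 hy hzA h1 h2 h3
      rw [hxcomb, hbc _ hzF] at h4
      simp only [smul_eq_mul, mul_zero, add_zero] at h4
      linarith
    -- the point w near the boundary
    set β := δ / (t₀ * a) with hβ
    have hδpos : 0 < δ := lt_of_lt_of_le hapos hxy
    have hβpos : 0 < β := div_pos hδpos hMpos
    have hβlt : β < 1 := by rw [hβ, div_lt_one hMpos]; exact hMgt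
    set w := β • y + (1 - β) • z with hw
    have hwA : w ∈ A := hconv.closure hy hzA hβpos.le (by linarith) (by ring)
    have huw : u w ≤ β * u y := by
      have h5 := huconv.2 hy hzA hβpos.le (by linarith : (0:ℝ) ≤ 1 - β) (by ring)
      rw [← hw, hbc _ hzF] at h5
      simp only [smul_eq_mul, mul_zero, add_zero] at h5
      linarith
    have hwz : dist w z = δ := by
      have hwz1 : w - z = β • (y - z) := by
        rw [hw, smul_sub, sub_smul, one_smul]
        abel
      rw [dist_eq_norm, hwz1, norm_smul, Real.norm_eq_abs, abs_of_nonneg hβpos.le,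
        ← dist_eq_norm, hdistyz, hβ]
      field_simp
    have hwd : infDist w F ≤ δ := by
      have := infDist_le_dist_of_mem hzF (x := w)
      rw [hwz] at this; exact this
    have hmem : -u w ≤ sSup SR := le_csSup hbddSR ⟨w, hwA, hwd, rfl⟩
    -- chain the inequalities
    have huy : u y ≤ 0 := hupos y hy
    have hstep : (1/t₀) * (-u y) ≤ β * (-u y) := by
      apply mul_le_mul_of_nonneg_right _ (by linarith)
      rw [hβ, div_le_div_iff₀ ht₀pos hMpos]
      nlinarith
    linarith
  apply le_antisymm
  · apply csSup_le hSLne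
    intro d hd
    obtain ⟨x, hx, y, hy, hxyd, rfl⟩ := hd
    rw [abs_sub_le_iff]
    exact ⟨key x hx y hy hxyd, key y hy x hx (by rwa [norm_sub_rev])⟩
  · apply csSup_le hSRne
    intro d hd
    obtain ⟨y, hy, hyd, rfl⟩ := hd
    obtain ⟨z, hzF, hzd⟩ := hFcomp.exists_infDist_eq_dist hFne y
    refine le_csSup hbddSL ⟨z, hFsub hzF, y, hy, ?_, ?_⟩
    · rw [← dist_eq_norm, dist_comm, ← hzd]; exact hyd
    · rw [hbc z hzF, zero_sub, abs_neg, abs_of_nonpos (hupos y hy)]
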